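/- Define L_U(a,λ) = ∫₀^∞ e^{-λt} U(a,t) dt. Then L_U satisfies ∂²L_U/∂λ² = 4(λ² - a)L_U - 4U'(a,0) - 4λU(a,0), and L_U(a,·) extends to an entire function of λ. -/

import Mathlib

open Filter Asymptotics MeasureTheory Set Topology

lemma lapAux0 {b c : ℝ} (h : b ≤ c) :
    (fun t : ℝ => Real.exp (-c * t)) =O[atTop] fun t => Real.exp (-b * t) := by
  rw [isBigO_iff]
  refine ⟨1, ?_⟩
  filter_upwards [eventually_ge_atTop (0:ℝ)] with t ht
  rw [Real.norm_eq_abs, Real.norm_eq_abs, abs_of_pos (Real.exp_pos _),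
    abs_of_pos (Real.exp_pos _), one_mul]
  exact Real.exp_le_exp.2 (by nlinarith)

lemma lapAux1 (s b : ℝ) :
    (fun t : ℝ => t ^ s * Real.exp (-t ^ 2 / 4)) =O[atTop] fun t => Real.exp (-b * t) := by
  rw [isBigO_iff]
  refine ⟨1, ?_⟩
  filter_upwards [eventually_ge_atTop (1:ℝ), eventually_ge_atTop (4*(b+|s|))] with t ht1 ht2
  have ht0 : (0:ℝ) < t := lt_of_lt_of_le one_pos ht1
  have h1 : t ^ s ≤ t ^ |s| := Real.rpow_le_rpow_of_exponent_le ht1 (le_abs_self s)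
  have h2 : t ^ |s| ≤ Real.exp (|s| * t) := by
    calc t ^ |s| ≤ (Real.exp t) ^ |s| :=
          Real.rpow_le_rpow ht0.le (by linarith [Real.add_one_le_exp t]) (abs_nonneg s)
      _ = Real.exp (t * |s|) := (Real.exp_mul t |s|).symm
      _ = Real.exp (|s| * t) := by rw [mul_comm]
  rw [Real.norm_eq_abs, Real.norm_eq_abs, abs_of_pos (Real.exp_pos _), one_mul,
    abs_of_nonneg (mul_nonneg (Real.rpow_nonneg ht0.le s) (Real.exp_pos _).le)]
  calc t ^ s * Real.exp (-t ^ 2 / 4) ≤ Real.exp (|s| * t) * Real.exp (-t ^ 2 / 4) :=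
        mul_le_mul_of_nonneg_right (h1.trans h2) (Real.exp_pos _).le
    _ = Real.exp (|s| * t + -t ^ 2 / 4) := (Real.exp_add _ _).symm
    _ ≤ Real.exp (-b * t) := Real.exp_le_exp.2 (by nlinarith)

lemma lapAux2 {g : ℝ → ℂ} (hg : Continuous g)
    (hO : g =O[atTop] fun t => Real.exp (-1 * t)) : IntegrableOn g (Set.Ioi 0) := by
  have h1 : IntegrableOn (fun t => ‖g t‖) (Set.Ioi (0:ℝ)) :=
    integrable_of_isBigO_exp_neg one_pos hg.norm.continuousOn hO.norm_left
  exact h1.mono' hg.aestronglyMeasurable.restrict (Filter.Eventually.of_forall fun t => le_rfl)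

lemma lapAuxCont {g : ℝ → ℝ} (hgc : Continuous g) (l : ℂ) (n : ℕ) :
    Continuous fun t : ℝ => (t:ℂ) ^ n * Complex.exp (-l * t) * (g t : ℂ) :=
  ((Complex.continuous_ofReal.pow n).mul
    (Complex.continuous_exp.comp (continuous_const.mul Complex.continuous_ofReal))).mul
    (Complex.continuous_ofReal.comp hgc)

lemma lapAux3 {g : ℝ → ℝ} (hg : ∀ b : ℝ, g =O[atTop] fun t => Real.exp (-b * t)) (l : ℂ) (n : ℕ) :
    (fun t : ℝ => (t:ℂ) ^ n * Complex.exp (-l * t) * (g t : ℂ)) =O[atTop]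
      fun t => Real.exp (-1 * t) := by
  obtain ⟨C, hC0, hC⟩ := (hg (n + 1 + |l.re|)).exists_nonneg
  rw [IsBigOWith, eventually_atTop] at hC
  obtain ⟨N, hN⟩ := hC
  rw [isBigO_iff]
  refine ⟨C, ?_⟩
  rw [eventually_atTop]
  refine ⟨max N 1, fun t ht => ?_⟩
  have ht1 : (1:ℝ) ≤ t := le_trans (le_max_right N 1) ht
  have ht0 : (0:ℝ) ≤ t := le_trans zero_le_one ht1
  have hgt := hN t (le_trans (le_max_left N 1) ht)
  simp only [Real.norm_eq_abs, Real.abs_exp] at hgt ⊢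
  have hnorm : ‖(t:ℂ) ^ n * Complex.exp (-l * t) * (g t : ℂ)‖
      = t ^ n * Real.exp (-l.re * t) * |g t| := by
    simp only [norm_mul, norm_pow, Complex.norm_real, Complex.norm_exp,
      Real.norm_eq_abs, abs_of_nonneg ht0]
    congr 2
    · simp [Complex.mul_re]
  rw [hnorm]
  have h1 : t ^ n ≤ Real.exp (n * t) := by
    calc t ^ n ≤ (Real.exp t) ^ n := pow_le_pow_left₀ ht0 (by linarith [Real.add_one_le_exp t]) n
      _ = Real.exp (n * t) := by rw [← Real.exp_nat_mul]
  have h2 : |g t| ≤ C * Real.exp (-(n + 1 + |l.re|) * t) := hgt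
  calc t ^ n * Real.exp (-l.re * t) * |g t|
      ≤ Real.exp (n * t) * Real.exp (-l.re * t) * (C * Real.exp (-(n + 1 + |l.re|) * t)) := by
        apply mul_le_mul (mul_le_mul_of_nonneg_right h1 (Real.exp_pos _).le) h2 (abs_nonneg _)
        positivity
    _ = C * Real.exp ((n:ℝ) * t + -l.re * t + -(n + 1 + |l.re|) * t) := by
        rw [Real.exp_add, Real.exp_add]; ring
    _ ≤ C * Real.exp (-1 * t) := by
        apply mul_le_mul_of_nonneg_left (Real.exp_le_exp.2 ?_) hC0
        nlinarith [neg_abs_le l.re, abs_nonneg l.re]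

lemma lapAux4 {g : ℝ → ℝ} (hgc : Continuous g)
    (hg : ∀ b : ℝ, g =O[atTop] fun t => Real.exp (-b * t)) (l : ℂ) (n : ℕ) :
    IntegrableOn (fun t : ℝ => (t:ℂ) ^ n * Complex.exp (-l * t) * (g t : ℂ)) (Set.Ioi 0) :=
  lapAux2 (lapAuxCont hgc l n) (lapAux3 hg l n)

theorem stmt15 (a : ℝ) (U : ℝ → ℝ)
    (hU : ContDiff ℝ ⊤ U)
    (hUode : ∀ t, deriv (deriv U) t - (t ^ 2 / 4 + a) * U t = 0)
    (hUdecay : (fun t : ℝ => U t) =O[atTop] fun t : ℝ =>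
      t ^ (-a - 1 / 2) * Real.exp (-t ^ 2 / 4)) :
    ∃ F : ℂ → ℂ, Differentiable ℂ F ∧
      (∀ l : ℂ,
        F l = ∫ t in Set.Ioi (0 : ℝ), Complex.exp (-l * t) * (U t : ℂ)) ∧
      (∀ l : ℂ, deriv (deriv F) l =
        4 * (l ^ 2 - (a : ℂ)) * F l - 4 * ((deriv U 0 : ℝ) : ℂ) - 4 * l * ((U 0 : ℝ) : ℂ)) := by
  have hUinf : ContDiff ℝ ((⊤:ℕ∞) : WithTop ℕ∞) U := hU.of_le le_top
  have hdiffU : Differentiable ℝ U := hUinf.differentiable (by simp)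
  have hU1 : ContDiff ℝ ((⊤:ℕ∞) : WithTop ℕ∞) (deriv U) := (contDiff_infty_iff_deriv.mp hUinf).2
  have hdiffU' : Differentiable ℝ (deriv U) := hU1.differentiable (by simp)
  have hcontU'' : Continuous (deriv (deriv U)) := ((contDiff_infty_iff_deriv.mp hU1).2).continuous
  have hcontU' : Continuous (deriv U) := hU1.continuous
  have hcontU : Continuous U := hU.continuous
  have hode : ∀ t, deriv (deriv U) t = (t ^ 2 / 4 + a) * U t := fun t => by
    have := hUode t; linarith
  have hOU : ∀ b : ℝ, U =O[atTop] fun t => Real.exp (-b * t) := fun b =>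
    hUdecay.trans (lapAux1 _ b)
  have hOU'' : ∀ b : ℝ, (deriv (deriv U)) =O[atTop] fun t => Real.exp (-b * t) := by
    intro b
    have h2 : (fun t : ℝ => t ^ 2 / 4 + a) =O[atTop] (fun t : ℝ => t ^ 2) := by
      rw [isBigO_iff]
      refine ⟨1/4 + |a|, ?_⟩
      filter_upwards [eventually_ge_atTop (1:ℝ)] with t ht
      rw [Real.norm_eq_abs, Real.norm_eq_abs]
      have h3 : (1:ℝ) ≤ t ^ 2 := by nlinarith
      calc |t ^ 2 / 4 + a| ≤ |t ^ 2 / 4| + |a| := abs_add_le _ _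
        _ = t ^ 2 / 4 + |a| := by rw [abs_of_nonneg (by positivity : (0:ℝ) ≤ t ^ 2 / 4)]
        _ ≤ (1/4 + |a|) * t ^ 2 := by nlinarith [abs_nonneg a]
        _ = (1/4 + |a|) * |t ^ 2| := by rw [abs_of_nonneg (sq_nonneg t)]
    have h1 : (fun t : ℝ => t ^ 2 / 4 + a) =O[atTop] fun t => Real.exp t :=
      h2.trans (Real.isLittleO_pow_exp_atTop (n := 2)).isBigO
    have heq : (fun t : ℝ => Real.exp t * Real.exp (-(b+1) * t)) = fun t => Real.exp (-b * t) :=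
      funext fun t => by rw [← Real.exp_add]; ring_nf
    rw [show deriv (deriv U) = fun t => (t ^ 2 / 4 + a) * U t from funext hode]
    exact heq ▸ (h1.mul (hOU (b+1)))
  have hexp10 : Tendsto (fun t : ℝ => Real.exp (-1 * t)) atTop (𝓝 0) := by
    simpa [neg_one_mul] using Real.tendsto_exp_neg_atTop_nhds_zero
  have htendU : Tendsto U atTop (𝓝 0) := (hOU 1).trans_tendsto hexp10
  have hintU'' : ∀ c : ℝ, IntegrableOn (deriv (deriv U)) (Set.Ioi c) := fun c =>
    integrable_of_isBigO_exp_neg one_pos hcontU''.continuousOn (hOU'' 1)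
  have htendU' : Tendsto (deriv U) atTop
      (𝓝 (deriv U 0 + ∫ s in Set.Ioi (0:ℝ), deriv (deriv U) s)) := by
    have h1 := intervalIntegral_tendsto_integral_Ioi 0 (hintU'' 0) tendsto_id
    have h2 : ∀ t : ℝ, deriv U 0 + (∫ s in (0:ℝ)..t, deriv (deriv U) s) = deriv U t := by
      intro t
      rw [intervalIntegral.integral_deriv_eq_sub (fun x _ => hdiffU' x)
        ((hcontU''.intervalIntegrable 0 t))]
      ring
    exact Filter.Tendsto.congr h2 (tendsto_const_nhds.add h1)
  have hL0 : deriv U 0 + (∫ s in Set.Ioi (0:ℝ), deriv (deriv U) s) = 0 := by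
    set L := deriv U 0 + ∫ s in Set.Ioi (0:ℝ), deriv (deriv U) s with hL
    have hdiff1 : Tendsto (fun t : ℝ => U (t+1) - U t) atTop (𝓝 0) := by
      have := (htendU.comp (tendsto_atTop_add_const_right atTop 1 tendsto_id)).sub htendU
      simpa using this
    have hdiff2 : Tendsto (fun t : ℝ => U (t+1) - U t) atTop (𝓝 L) := by
      rw [Metric.tendsto_atTop]
      intro ε hε
      obtain ⟨N, hN⟩ := Metric.tendsto_atTop.mp htendU' (ε/2) (by positivity)
      refine ⟨N, fun t ht => ?_⟩
      have key : U (t+1) - U t - L = ∫ s in t..(t+1), (deriv U s - L) := by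
        rw [intervalIntegral.integral_sub (hcontU'.intervalIntegrable _ _)
          intervalIntegrable_const,
          intervalIntegral.integral_deriv_eq_sub (fun x _ => hdiffU x)
            (hcontU'.intervalIntegrable _ _), intervalIntegral.integral_const]
        simp
      have hb : ‖∫ s in t..(t+1), (deriv U s - L)‖ ≤ (ε/2) * |(t+1) - t| := by
        apply intervalIntegral.norm_integral_le_of_norm_le_const
        intro s hs
        rw [Set.uIoc_of_le (by linarith)] at hs
        have : dist (deriv U s) L < ε/2 := hN s (le_trans ht hs.1.le)
        rw [Real.norm_eq_abs, ← Real.dist_eq]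
        exact this.le
      rw [Real.dist_eq, key]
      rw [Real.norm_eq_abs] at hb
      calc |∫ s in t..(t+1), (deriv U s - L)| ≤ (ε/2) * |(t+1) - t| := hb
        _ = ε/2 := by simp
        _ < ε := by linarith
    exact tendsto_nhds_unique hdiff2 hdiff1
  have htendU'0 : Tendsto (deriv U) atTop (𝓝 0) := hL0 ▸ htendU'
  have hU'rep : ∀ x : ℝ, deriv U x = - ∫ s in Set.Ioi x, deriv (deriv U) s := by
    intro x
    have := integral_Ioi_of_hasDerivAt_of_tendsto' (f := deriv U) (f' := deriv (deriv U))
      (a := x) (fun y _ => (hdiffU' y).hasDerivAt) (hintU'' x) htendU'0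
    rw [this]; ring
  have hOU' : ∀ b : ℝ, (deriv U) =O[atTop] fun t => Real.exp (-b * t) := by
    intro b
    have main : ∀ c : ℝ, 0 < c → (deriv U) =O[atTop] fun t => Real.exp (-c * t) := by
      intro c hc
      obtain ⟨C, hC0, hC⟩ := (hOU'' c).exists_nonneg
      rw [IsBigOWith, eventually_atTop] at hC
      obtain ⟨N, hN⟩ := hC
      rw [isBigO_iff]
      refine ⟨C/c, ?_⟩
      rw [eventually_atTop]
      refine ⟨N, fun x hx => ?_⟩
      have h1 : ‖deriv U x‖ ≤ ∫ s in Set.Ioi x, C * Real.exp (-c * s) := by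
        rw [hU'rep x, norm_neg]
        refine norm_integral_le_of_norm_le ((exp_neg_integrableOn_Ioi x hc).const_mul C) ?_
        filter_upwards [ae_restrict_mem measurableSet_Ioi] with s hs
        have := hN s (by linarith [hs.out])
        simpa [Real.norm_eq_abs, Real.abs_exp] using this
      have h2 : ∫ s in Set.Ioi x, C * Real.exp (-c * s) = C/c * Real.exp (-c * x) := by
        rw [MeasureTheory.integral_const_mul]
        have h3 : ∫ s in Set.Ioi x, Real.exp (-c * s) = Real.exp (-c * x) / c := by
          have h4 : ∀ y ∈ Set.Ici x, HasDerivAt (fun s => -Real.exp (-c * s) / c)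
              (Real.exp (-c * y)) y := by
            intro y _
            have h5 : HasDerivAt (fun s : ℝ => -c * s) (-c) y := by
              simpa using (hasDerivAt_id y).const_mul (-c)
            have h6 := (h5.exp.neg).div_const c
            refine h6.congr_deriv ?_
            field_simp
          have h7 : Tendsto (fun s => -Real.exp (-c * s) / c) atTop (𝓝 0) := by
            have : Tendsto (fun s : ℝ => Real.exp (-c * s)) atTop (𝓝 0) :=
              Real.tendsto_exp_atBot.comp (tendsto_id.const_mul_atTop_of_neg (by linarith))
            simpa using (this.neg).div_const c
          have h8 := integral_Ioi_of_hasDerivAt_of_tendsto' h4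
            (exp_neg_integrableOn_Ioi x hc) h7
          rw [h8]; ring
        rw [h3]; ring
      rw [h2] at h1
      calc ‖deriv U x‖ ≤ C/c * Real.exp (-c * x) := h1
        _ = C/c * ‖Real.exp (-c * x)‖ := by rw [Real.norm_eq_abs, Real.abs_exp]
    exact (main (max b 1) (lt_of_lt_of_le one_pos (le_max_right b 1))).trans
      (lapAux0 (le_max_left b 1))
  -- Part 2: the Laplace transform and its derivatives
  set F : ℂ → ℂ := fun l => ∫ t in Set.Ioi (0:ℝ), Complex.exp (-l * t) * (U t : ℂ) with hFdef
  have hnormexp : ∀ z : ℂ, ‖Complex.exp z‖ = Real.exp z.re := fun z => by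
    rw [Complex.norm_exp]
  have hderivJ : ∀ (n : ℕ) (l₀ : ℂ), HasDerivAt
      (fun l => ∫ t in Set.Ioi (0:ℝ), (t:ℂ) ^ n * Complex.exp (-l * t) * (U t : ℂ))
      (-(∫ t in Set.Ioi (0:ℝ), (t:ℂ) ^ (n+1) * Complex.exp (-l₀ * t) * (U t : ℂ))) l₀ := by
    intro n l₀
    have key := hasDerivAt_integral_of_dominated_loc_of_deriv_le
      (μ := volume.restrict (Set.Ioi (0:ℝ)))
      (F := fun (l : ℂ) (t : ℝ) => (t:ℂ) ^ n * Complex.exp (-l * t) * (U t : ℂ))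
      (F' := fun (l : ℂ) (t : ℝ) => -((t:ℂ) ^ (n+1) * Complex.exp (-l * t) * (U t : ℂ)))
      (x₀ := l₀) (s := Metric.ball l₀ 1)
      (bound := fun t => ‖(t:ℂ) ^ (n+1) * Complex.exp (-(-(‖l₀‖+1) : ℂ) * t) * (U t : ℂ)‖)
      (Metric.ball_mem_nhds l₀ one_pos)
      (Filter.Eventually.of_forall fun x => (lapAuxCont hcontU x n).aestronglyMeasurable.restrict)
      (lapAux4 hcontU hOU l₀ n)
      ((lapAuxCont hcontU l₀ (n+1)).neg.aestronglyMeasurable.restrict)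
      ?_ ((lapAux4 hcontU hOU (-(‖l₀‖+1) : ℂ) (n+1)).norm) ?_
    · rw [MeasureTheory.integral_neg] at key
      exact key.2
    · -- bound
      filter_upwards [ae_restrict_mem measurableSet_Ioi] with t ht
      intro x hx
      have ht0 : (0:ℝ) ≤ t := le_of_lt ht
      rw [norm_neg, norm_mul, norm_mul, norm_mul, norm_mul]
      have hxb : ‖x‖ ≤ ‖l₀‖ + 1 := by
        calc ‖x‖ = ‖l₀ + (x - l₀)‖ := by ring_nf
          _ ≤ ‖l₀‖ + ‖x - l₀‖ := norm_add_le _ _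
          _ ≤ ‖l₀‖ + 1 := by
              have := Metric.mem_ball.mp hx
              rw [dist_eq_norm] at this
              linarith
      have hexp : ‖Complex.exp (-x * t)‖ ≤ ‖Complex.exp (-(-(‖l₀‖+1) : ℂ) * t)‖ := by
        rw [hnormexp, hnormexp]
        apply Real.exp_le_exp.2
        have h1 : (-x * (t:ℂ)).re = -x.re * t := by simp [Complex.mul_re]
        have h2 : (-(-(‖l₀‖+1) : ℂ) * (t:ℂ)).re = (‖l₀‖+1) * t := by simp [Complex.mul_re]
        rw [h1, h2]
        have : -x.re ≤ ‖l₀‖ + 1 := by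
          have := Complex.abs_re_le_norm x
          have h := neg_abs_le x.re
          nlinarith
        nlinarith
      gcongr
    · -- differentiability
      filter_upwards [ae_restrict_mem measurableSet_Ioi] with t _
      intro x _
      have h0 : HasDerivAt (fun x : ℂ => -x * (t:ℂ)) (-(t:ℂ)) x := by
        simpa using (hasDerivAt_id x).neg.mul_const (t:ℂ)
      have h1 := h0.cexp
      have h2 := (h1.const_mul ((t:ℂ) ^ n)).mul_const ((U t : ℂ))
      refine h2.congr_deriv ?_
      rw [pow_succ]; ring
  have hF0 : ∀ l : ℂ, HasDerivAt F
      (-(∫ t in Set.Ioi (0:ℝ), (t:ℂ) ^ 1 * Complex.exp (-l * t) * (U t : ℂ))) l := by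
    intro l
    have := hderivJ 0 l
    simp only [pow_zero, one_mul] at this
    exact this
  have hDF : Differentiable ℂ F := fun l => (hF0 l).differentiableAt
  have hderivF : deriv F = fun l =>
      -(∫ t in Set.Ioi (0:ℝ), (t:ℂ) ^ 1 * Complex.exp (-l * t) * (U t : ℂ)) :=
    funext fun l => (hF0 l).deriv
  have hderiv2F : ∀ l : ℂ, deriv (deriv F) l =
      ∫ t in Set.Ioi (0:ℝ), (t:ℂ) ^ 2 * Complex.exp (-l * t) * (U t : ℂ) := by
    intro l
    rw [hderivF]
    have h := (hderivJ 1 l).neg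
    rw [neg_neg] at h
    exact h.deriv
  -- Part 3: integration by parts
  have hibp : ∀ (l : ℂ) (g : ℝ → ℝ), Differentiable ℝ g → Continuous g →
      Continuous (deriv g) →
      (∀ b : ℝ, g =O[atTop] fun t => Real.exp (-b * t)) →
      (∀ b : ℝ, (deriv g) =O[atTop] fun t => Real.exp (-b * t)) →
      (∫ t in Set.Ioi (0:ℝ), Complex.exp (-l * t) * ((deriv g t : ℝ) : ℂ))
        = l * (∫ t in Set.Ioi (0:ℝ), Complex.exp (-l * t) * (g t : ℂ)) - ((g 0 : ℝ) : ℂ) := by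
    intro l g hdg hcg hcg' hOg hOg'
    have hint1 : IntegrableOn (fun t : ℝ => Complex.exp (-l * t) * (g t : ℂ)) (Set.Ioi 0) := by
      have := lapAux4 hcg hOg l 0
      simpa only [pow_zero, one_mul] using this
    have hint2 : IntegrableOn (fun t : ℝ => Complex.exp (-l * t) * ((deriv g t : ℝ) : ℂ))
        (Set.Ioi 0) := by
      have := lapAux4 hcg' hOg' l 0
      simpa only [pow_zero, one_mul] using this
    have hder : ∀ x : ℝ, HasDerivAt (fun t : ℝ => Complex.exp (-l * t) * (g t : ℂ))
        (-l * (Complex.exp (-l * x) * (g x : ℂ)) + Complex.exp (-l * x) * ((deriv g x : ℝ) : ℂ)) x := by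
      intro x
      have h0 : HasDerivAt (fun t : ℝ => -l * (t : ℂ)) (-l) x := by
        simpa using ((hasDerivAt_id x).ofReal_comp.const_mul (-l))
      have h1 := h0.cexp
      have h2 : HasDerivAt (fun t : ℝ => ((g t : ℝ) : ℂ)) ((deriv g x : ℝ) : ℂ) x :=
        ((hdg x).hasDerivAt).ofReal_comp
      have h3 := h1.mul h2
      refine h3.congr_deriv ?_
      ring
    have hfint : IntegrableOn (fun x : ℝ =>
        -l * (Complex.exp (-l * x) * (g x : ℂ)) + Complex.exp (-l * x) * ((deriv g x : ℝ) : ℂ))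
        (Set.Ioi 0) := (hint1.const_mul (-l)).add hint2
    have htend : Tendsto (fun t : ℝ => Complex.exp (-l * t) * (g t : ℂ)) atTop (𝓝 0) := by
      have h := lapAux3 hOg l 0
      simp only [pow_zero, one_mul] at h
      exact h.trans_tendsto hexp10
    have hibp0 := integral_Ioi_of_hasDerivAt_of_tendsto' (a := 0)
      (fun x _ => hder x) hfint htend
    rw [MeasureTheory.integral_add (hint1.const_mul (-l)) hint2,
      MeasureTheory.integral_const_mul] at hibp0
    simp only [Complex.ofReal_zero, mul_zero, neg_zero, Complex.exp_zero, one_mul,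
      zero_sub] at hibp0
    linear_combination hibp0
  -- Apply IBP twice
  refine ⟨F, hDF, fun l => rfl, fun l => ?_⟩
  have hI1 := hibp l U hdiffU hcontU hcontU' hOU hOU'
  have hI2 := hibp l (deriv U) hdiffU' hcontU' hcontU'' hOU' hOU''
  have hintc1 : IntegrableOn (fun t : ℝ => Complex.exp (-l * t) * ((deriv (deriv U) t : ℝ) : ℂ))
      (Set.Ioi 0) := by
    have := lapAux4 hcontU'' hOU'' l 0
    simpa only [pow_zero, one_mul] using this
  have hintc0 : IntegrableOn (fun t : ℝ => Complex.exp (-l * t) * (U t : ℂ)) (Set.Ioi 0) := by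
    have := lapAux4 hcontU hOU l 0
    simpa only [pow_zero, one_mul] using this
  have hJ2 : (∫ t in Set.Ioi (0:ℝ), (t:ℂ) ^ 2 * Complex.exp (-l * t) * (U t : ℂ))
      = 4 * (∫ t in Set.Ioi (0:ℝ), Complex.exp (-l * t) * ((deriv (deriv U) t : ℝ) : ℂ))
        - 4 * (a:ℂ) * (∫ t in Set.Ioi (0:ℝ), Complex.exp (-l * t) * (U t : ℂ)) := by
    have hpt : (fun t : ℝ => (t:ℂ) ^ 2 * Complex.exp (-l * t) * (U t : ℂ))
        = fun t : ℝ => (4:ℂ) * (Complex.exp (-l * t) * ((deriv (deriv U) t : ℝ) : ℂ))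
          - (4 * (a:ℂ)) * (Complex.exp (-l * t) * (U t : ℂ)) := by
      funext t
      rw [hode t]
      push_cast
      ring
    rw [hpt, MeasureTheory.integral_sub (hintc1.const_mul 4) (hintc0.const_mul (4 * (a:ℂ))),
      MeasureTheory.integral_const_mul, MeasureTheory.integral_const_mul]
  rw [hderiv2F l, hJ2, hI2, hI1]
  ring
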